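/- Let G₁ and G₂ be groups and let f : G₁ → G₂ be a map satisfying f(a²ba⁻¹) = f(a)²·f(b)·f(a)⁻¹ for all a,b ∈ G₁. Then f(a⁻¹) = f(a)⁻¹ for all a ∈ G₁. -/

import Mathlib

/-- A map preserving the gyrogroup operation `a ⊙ b = a² b a⁻¹` satisfies
`f (a⁻¹) = (f a)⁻¹`. -/
theorem gyro_hom_map_inv (G₁ G₂ : Type*) [Group G₁] [Group G₂] (f : G₁ → G₂)
    (hf : ∀ a b : G₁, f (a ^ 2 * b * a⁻¹) = (f a) ^ 2 * f b * (f a)⁻¹) :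
    ∀ a : G₁, f a⁻¹ = (f a)⁻¹ := by
  have h1 : f 1 = 1 := by
    have h0 := hf 1 1
    simp only [one_pow, mul_one, inv_one, one_mul] at h0
    have hm : f 1 * f 1 = f 1 := by
      nth_rewrite 3 [h0]; rw [sq]; group
    exact mul_eq_left.mp hm
  intro a
  have h2 := hf a a⁻¹
  have hx : a ^ 2 * a⁻¹ * a⁻¹ = 1 := by group
  rw [hx, h1] at h2
  have h3 : f a⁻¹ = (f a ^ 2)⁻¹ * (1 * f a) := by
    rw [h2]; group
  rw [h3]; group
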